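/- Let p ≥ 1, let g be a real symmetric positive definite p×p matrix, let L be an arbitrary real p×p matrix, and let a, b, c be real numbers with a > 0, b > 0 and c² < a·b. Define the p×p blocks P_yy := a·g − c·(Lᵀ·g + g·L) + b·Lᵀ·g·L, P_yz := −c·g + b·Lᵀ·g, P_zy := −c·g + b·g·L and P_zz := b·g, and let P be the 2p×2p block matrix [[P_yy, P_yz],[P_zy, P_zz]]. Then P is symmetric positive definite and P_yy − P_yz·P_zz⁻¹·P_zy = (a − c²/b)·g. -/

import Mathlib

open Matrix

section aux

variable {n m : Type*} [Fintype n] [Fintype m]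

lemma posDef_conj_aux {A M : Matrix n n ℝ} (hA : A.PosDef)
    (hinj : Function.Injective M.mulVec) : (Mᵀ * A * M).PosDef := by
  rw [posDef_iff_dotProduct_mulVec]
  refine ⟨?_, ?_⟩
  · have h := hA.1
    simp only [IsHermitian, conjTranspose_eq_transpose_of_trivial] at h ⊢
    rw [Matrix.transpose_mul, Matrix.transpose_mul, transpose_transpose, h, Matrix.mul_assoc]
  · intro x hx
    have hx' : M *ᵥ x ≠ 0 := fun h => hx (hinj (by simpa using h))
    have h2 := hA.dotProduct_mulVec_pos hx'
    simp only [star_trivial] at h2 ⊢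
    rw [Matrix.mul_assoc, ← Matrix.mulVec_mulVec, ← Matrix.mulVec_mulVec,
      Matrix.dotProduct_mulVec, Matrix.vecMul_transpose]
    exact h2

lemma posDef_blockDiag_aux {A : Matrix n n ℝ} {D : Matrix m m ℝ} (hA : A.PosDef)
    (hD : D.PosDef) : (fromBlocks A 0 0 D).PosDef := by
  rw [posDef_iff_dotProduct_mulVec]
  refine ⟨?_, ?_⟩
  · have h1 := hA.1; have h2 := hD.1
    simp only [IsHermitian, conjTranspose_eq_transpose_of_trivial] at h1 h2 ⊢
    simp [fromBlocks_transpose, h1, h2]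
  · intro x hx
    rw [star_trivial, fromBlocks_mulVec, dotProduct_block]
    simp only [Sum.elim_comp_inl, Sum.elim_comp_inr, Matrix.zero_mulVec, add_zero, zero_add]
    rcases (by
      by_contra h
      push_neg at h
      apply hx
      ext i
      cases i with
      | inl i => exact congrFun h.1 i
      | inr i => exact congrFun h.2 i : x ∘ Sum.inl ≠ 0 ∨ x ∘ Sum.inr ≠ 0) with h | h
    · have := hA.dotProduct_mulVec_pos h
      have h2 := hD.posSemidef.dotProduct_mulVec_nonneg (x ∘ Sum.inr)
      simp only [star_trivial] at this h2
      linarith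
    · have := hD.dotProduct_mulVec_pos h
      have h2 := hA.posSemidef.dotProduct_mulVec_nonneg (x ∘ Sum.inl)
      simp only [star_trivial] at this h2
      linarith

lemma posDef_smul_aux {A : Matrix n n ℝ} (hA : A.PosDef) {r : ℝ} (hr : 0 < r) :
    (r • A).PosDef := by
  rw [posDef_iff_dotProduct_mulVec]
  refine ⟨?_, fun x hx => ?_⟩
  · have h := hA.1
    simp only [IsHermitian, conjTranspose_eq_transpose_of_trivial] at h ⊢
    rw [transpose_smul, h]
  · have := hA.dotProduct_mulVec_pos hx
    simp only [star_trivial, Matrix.smul_mulVec, dotProduct_smul, smul_eq_mul] at this ⊢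
    positivity

end aux

theorem stmt_13 {p : ℕ} (hp : 1 ≤ p)
    (g : Matrix (Fin p) (Fin p) ℝ) (hgsym : g.IsSymm) (hg : g.PosDef)
    (L : Matrix (Fin p) (Fin p) ℝ)
    (a b c : ℝ) (ha : 0 < a) (hb : 0 < b) (hc : c ^ 2 < a * b) :
    let Pyy : Matrix (Fin p) (Fin p) ℝ := a • g - c • (Lᵀ * g + g * L) + b • (Lᵀ * g * L)
    let Pyz : Matrix (Fin p) (Fin p) ℝ := (-c) • g + b • (Lᵀ * g)
    let Pzy : Matrix (Fin p) (Fin p) ℝ := (-c) • g + b • (g * L)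
    let Pzz : Matrix (Fin p) (Fin p) ℝ := b • g
    (Matrix.fromBlocks Pyy Pyz Pzy Pzz).IsSymm ∧
      (Matrix.fromBlocks Pyy Pyz Pzy Pzz).PosDef ∧
      Pyy - Pyz * Pzz⁻¹ * Pzy = (a - c ^ 2 / b) • g := by
  intro Pyy Pyz Pzy Pzz
  have hb0 : b ≠ 0 := hb.ne'
  have hgeq : gᵀ = g := hgsym
  have hschur : a - c ^ 2 / b > 0 := by
    rw [gt_iff_lt, sub_pos, div_lt_iff₀ hb]
    linarith
  -- symmetry
  have hsym : (Matrix.fromBlocks Pyy Pyz Pzy Pzz).IsSymm := by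
    rw [Matrix.IsSymm, fromBlocks_transpose]
    congr 1 <;> simp [Pyy, Pyz, Pzy, Pzz, transpose_add, transpose_sub, transpose_smul,
      transpose_mul, hgeq, Matrix.mul_assoc] <;> abel
  refine ⟨hsym, ?_, ?_⟩
  · -- positive definite
    set M : Matrix (Fin p ⊕ Fin p) (Fin p ⊕ Fin p) ℝ :=
      fromBlocks 1 0 (L + (-(c/b)) • 1) 1 with hM
    set D : Matrix (Fin p ⊕ Fin p) (Fin p ⊕ Fin p) ℝ :=
      fromBlocks ((a - c ^ 2 / b) • g) 0 0 (b • g) with hD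
    have hDpd : D.PosDef := posDef_blockDiag_aux (posDef_smul_aux hg hschur) (posDef_smul_aux hg hb)
    have hMinj : Function.Injective M.mulVec := by
      have hinv : fromBlocks 1 0 (-(L + (-(c/b)) • 1)) 1 * M = 1 := by
        have h0 : fromBlocks 1 0 (-(L + (-(c/b)) • 1)) 1 * M
            = fromBlocks (1 : Matrix (Fin p) (Fin p) ℝ) 0 0 1 := by
          rw [hM, fromBlocks_multiply, fromBlocks_inj]
          refine ⟨by simp, by simp, by simp, by simp⟩
        rw [h0, fromBlocks_one]
      intro x y hxy
      have h2 : (fromBlocks 1 0 (-(L + (-(c/b)) • 1)) 1 * M) *ᵥ x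
          = (fromBlocks 1 0 (-(L + (-(c/b)) • 1)) 1 * M) *ᵥ y := by
        rw [← Matrix.mulVec_mulVec, ← Matrix.mulVec_mulVec, hxy]
      rw [hinv] at h2
      simpa using h2
    have hPeq : Matrix.fromBlocks Pyy Pyz Pzy Pzz = Mᵀ * D * M := by
      rw [hM, hD, fromBlocks_transpose, fromBlocks_multiply, fromBlocks_multiply,
        fromBlocks_inj]
      refine ⟨?_, ?_, ?_, ?_⟩
      · simp only [Pyy, Matrix.mul_zero, Matrix.zero_mul, Matrix.one_mul, Matrix.mul_one,
          add_zero, zero_add, transpose_add, transpose_smul, transpose_one, transpose_zero, Matrix.mul_add,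
          Matrix.add_mul, smul_mul_assoc, mul_smul_comm, smul_smul, Matrix.mul_assoc]
        match_scalars <;> field_simp <;> ring
      · simp only [Pyz, Matrix.mul_zero, Matrix.zero_mul, Matrix.one_mul, Matrix.mul_one,
          add_zero, zero_add, transpose_add, transpose_smul, transpose_one, transpose_zero, Matrix.mul_add,
          Matrix.add_mul, smul_mul_assoc, mul_smul_comm, smul_smul, Matrix.mul_assoc]
        match_scalars <;> field_simp <;> ring
      · simp only [Pzy, Matrix.mul_zero, Matrix.zero_mul, Matrix.one_mul, Matrix.mul_one,
          add_zero, zero_add, transpose_add, transpose_smul, transpose_one, transpose_zero,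
          Matrix.mul_add, Matrix.add_mul, smul_mul_assoc, mul_smul_comm,
          smul_smul, Matrix.mul_assoc]
        match_scalars <;> field_simp <;> ring
      · simp [Pzz]
    rw [hPeq]
    exact posDef_conj_aux hDpd hMinj
  · -- Schur complement
    have hgdet : IsUnit g.det := hg.det_pos.ne'.isUnit
    have hg1 : g * g⁻¹ = 1 := Matrix.mul_nonsing_inv g hgdet
    have hPzzinv : Pzz⁻¹ = b⁻¹ • g⁻¹ := by
      apply Matrix.inv_eq_right_inv
      rw [smul_mul_smul_comm, hg1, mul_inv_cancel₀ hb0, one_smul]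
    rw [hPzzinv]
    have e1 : g * (g⁻¹ * g) = g := by
      rw [Matrix.nonsing_inv_mul g hgdet, Matrix.mul_one]
    have e2 : g * (g⁻¹ * (g * L)) = g * L := by
      rw [← Matrix.mul_assoc g g⁻¹, hg1, Matrix.one_mul]
    simp only [Pyy, Pyz, Pzy, Matrix.mul_add, Matrix.add_mul, smul_mul_assoc,
      mul_smul_comm, smul_smul, smul_add, Matrix.mul_assoc, e1, e2]
    match_scalars <;> field_simp <;> ring
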